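/- Let n ≥ 1, γ ≠ 0, h ∈ ℝ. Define H(q,p) = ½‖p‖² − γ/‖q‖ on (ℝ^n \ {0}) × ℝ^n and F(q,p) = (‖p‖² − 2h)²·‖q‖²/(8γ²) on ℝ^n × ℝ^n. If q ≠ 0 and H(q,p) = h, then the Fréchet derivative of F at (q,p) equals (‖q‖/γ) • (the Fréchet derivative of H at (q,p)). -/

import Mathlib

set_option maxHeartbeats 1000000 in
/-- Section 5.2 of the paper: on the Kepler energy surface
`H(q,p) = ½‖p‖² − γ/‖q‖ = h`, the Fréchet derivative of the regularized
Hamiltonian `F(q,p) = (‖p‖² − 2h)²‖q‖²/(8γ²)` equals `(‖q‖/γ) • DH(q,p)`,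
i.e. `X_F = (|q|/γ) X_H = Z` along `M_h`. -/
theorem stmt_18 (n : ℕ) (hn : 1 ≤ n) (γ h : ℝ) (hγ : γ ≠ 0)
    (H : EuclideanSpace ℝ (Fin n) × EuclideanSpace ℝ (Fin n) → ℝ)
    (hH : ∀ x : EuclideanSpace ℝ (Fin n) × EuclideanSpace ℝ (Fin n),
      x.1 ≠ 0 → H x = (1/2 : ℝ) * ‖x.2‖^2 - γ / ‖x.1‖)
    (F : EuclideanSpace ℝ (Fin n) × EuclideanSpace ℝ (Fin n) → ℝ)
    (hF : ∀ x : EuclideanSpace ℝ (Fin n) × EuclideanSpace ℝ (Fin n),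
      F x = (‖x.2‖^2 - 2 * h)^2 * ‖x.1‖^2 / (8 * γ^2)) :
    ∀ (q p : EuclideanSpace ℝ (Fin n)), q ≠ 0 → H (q, p) = h →
      fderiv ℝ F (q, p) = (‖q‖ / γ) • fderiv ℝ H (q, p) := by
  intro q p hq hHh
  have hr : (0:ℝ) < ‖q‖ := norm_pos_iff.mpr hq
  have hrne : ‖q‖ ≠ 0 := hr.ne'
  -- constraint
  have hcon : ‖p‖^2 - 2*h = 2*γ/‖q‖ := by
    have h1 := hH (q,p) hq
    rw [hHh] at h1
    have h2 : (1/2 : ℝ) * ‖p‖^2 - γ / ‖q‖ = h := h1.symm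
    field_simp at h2 ⊢
    linarith
  -- derivatives of the norm squares
  have hq2 := (hasFDerivAt_fst (𝕜 := ℝ)
    (p := ((q,p) : EuclideanSpace ℝ (Fin n) × EuclideanSpace ℝ (Fin n)))).norm_sq
  have hp2 := (hasFDerivAt_snd (𝕜 := ℝ)
    (p := ((q,p) : EuclideanSpace ℝ (Fin n) × EuclideanSpace ℝ (Fin n)))).norm_sq
  -- derivative of F
  have hFfun : F = fun x : EuclideanSpace ℝ (Fin n) × EuclideanSpace ℝ (Fin n) =>
      ((‖x.2‖^2 - 2*h) * (‖x.2‖^2 - 2*h)) * ‖x.1‖^2 * (8*γ^2)⁻¹ := by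
    funext x; rw [hF]; ring
  have hFd := (((hp2.sub_const (2*h)).mul (hp2.sub_const (2*h))).mul hq2).mul_const ((8*γ^2)⁻¹)
  simp only [Pi.mul_apply] at hFd
  rw [← hFfun] at hFd
  -- derivative of H
  have hsq : Real.sqrt (‖q‖^2) = ‖q‖ := Real.sqrt_sq hr.le
  have hg : HasDerivAt (fun t : ℝ => γ / Real.sqrt t)
      ((0 * Real.sqrt (‖q‖^2) - γ * (1 / (2 * Real.sqrt (‖q‖^2)))) / (Real.sqrt (‖q‖^2))^2)
      (‖q‖^2) :=
    (hasDerivAt_const _ γ).div (Real.hasDerivAt_sqrt (by positivity))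
      (by rw [hsq]; exact hrne)
  have hginv := hg.comp_hasFDerivAt (q,p) hq2
  have hHd := (hp2.const_mul (1/2 : ℝ)).sub hginv
  have heq : (fun x : EuclideanSpace ℝ (Fin n) × EuclideanSpace ℝ (Fin n) =>
      (1/2:ℝ) * ‖x.2‖^2 - γ / Real.sqrt (‖x.1‖^2))
      = fun x => (1/2:ℝ) * ‖x.2‖^2 - γ / ‖x.1‖ := by
    funext x; rw [Real.sqrt_sq (norm_nonneg _)]
  simp only [Function.comp_def, Pi.sub_def] at hHd
  rw [heq] at hHd
  have hopen : IsOpen {x : EuclideanSpace ℝ (Fin n) × EuclideanSpace ℝ (Fin n) | x.1 ≠ 0} :=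
    isOpen_compl_singleton.preimage continuous_fst
  have hev : H =ᶠ[nhds (q,p)] fun x => (1/2:ℝ) * ‖x.2‖^2 - γ / ‖x.1‖ := by
    filter_upwards [hopen.mem_nhds (hq :
      ((q,p) : EuclideanSpace ℝ (Fin n) × EuclideanSpace ℝ (Fin n)).1 ≠ 0)] with x hx
    exact hH x hx
  rw [hFd.fderiv, hev.fderiv_eq, hHd.fderiv]
  refine ContinuousLinearMap.ext fun v => ?_
  simp only [ContinuousLinearMap.smul_apply, ContinuousLinearMap.add_apply,
    ContinuousLinearMap.sub_apply, ContinuousLinearMap.coe_smul', Pi.smul_apply,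
    ContinuousLinearMap.comp_apply, innerSL_apply_apply, smul_eq_mul, nsmul_eq_mul, hsq]
  set a : ℝ := (inner ℝ q v.1 : ℝ)
  set b : ℝ := (inner ℝ p v.2 : ℝ)
  have hb : ‖p‖^2 = 2*h + 2*γ/‖q‖ := by linarith [hcon]
  rw [hb]
  push_cast
  field_simp
  ring
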